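/- Let X₁,…,Xₙ and Y be Banach spaces and let C ⊆ L(X₁,…,Xₙ;Y) be a norm-closed convex set of continuous n-linear operators. If C is not sequentially closed under pointwise convergence, i.e. there exist a sequence (A_k)_k ⊆ C and an operator A ∈ L(X₁,…,Xₙ;Y) with A ∉ C such that ‖A_k(x₁,…,xₙ) − A(x₁,…,xₙ)‖ → 0 for all x₁ ∈ X₁, …, xₙ ∈ Xₙ, then there exists a continuous n-linear operator S : X₁ × ⋯ × Xₙ → Y that does not attain its norm. -/

import Mathlib

open Filter Topology

universe v

variable {𝕜 : Type*} [RCLike 𝕜] {n : ℕ} {X : Fin n → Type*}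
  [∀ i, NormedAddCommGroup (X i)] [∀ i, NormedSpace 𝕜 (X i)]
  {Y : Type*} [NormedAddCommGroup Y] [NormedSpace 𝕜 Y]

lemma multilinear_banach_steinhaus {Y : Type*} [NormedAddCommGroup Y] [NormedSpace 𝕜 Y] :
    ∀ (m : ℕ) (X : Fin m → Type v) [∀ i, NormedAddCommGroup (X i)] [∀ i, NormedSpace 𝕜 (X i)]
      [∀ i, CompleteSpace (X i)] (T : ℕ → ContinuousMultilinearMap 𝕜 X Y),
      (∀ x, ∃ c, ∀ k, ‖T k x‖ ≤ c) → ∃ M, ∀ k, ‖T k‖ ≤ M := by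
  intro m
  induction m with
  | zero =>
    intro X _ _ _ T h
    obtain ⟨c, hc⟩ := h (fun i => i.elim0)
    refine ⟨max c 0, fun k => (T k).opNorm_le_bound (le_max_right _ _) (fun m => ?_)⟩
    have hm : m = (fun i => i.elim0) := Subsingleton.elim _ _
    have h1 : (∏ i, ‖m i‖ : ℝ) = 1 := by simp
    rw [h1, mul_one, hm]
    exact le_trans (hc k) (le_max_left _ _)
  | succ m ih =>
    intro X _ _ _ T h
    set L : ℕ → (X 0 →L[𝕜] ContinuousMultilinearMap 𝕜 (fun i : Fin m => X i.succ) Y) :=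
      fun k => continuousMultilinearCurryLeftEquiv 𝕜 X Y (T k) with hL
    have hpt : ∀ x₀ : X 0, ∃ c, ∀ k, ‖L k x₀‖ ≤ c := by
      intro x₀
      apply ih (fun i : Fin m => X i.succ) (fun k => L k x₀)
      intro y
      obtain ⟨c, hc⟩ := h (Fin.cons x₀ y)
      exact ⟨c, fun k => by simpa [hL] using hc k⟩
    obtain ⟨M, hM⟩ := banach_steinhaus hpt
    refine ⟨M, fun k => ?_⟩
    have : ‖T k‖ = ‖L k‖ := ((continuousMultilinearCurryLeftEquiv 𝕜 X Y).norm_map (T k)).symm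
    rw [this]; exact hM k

lemma mem_of_convex_sum {E : Type*} [AddCommMonoid E] [Module 𝕜 E] (S : Set E)
    (hS : ∀ U ∈ S, ∀ V ∈ S, ∀ a b : ℝ, 0 ≤ a → 0 ≤ b → a + b = 1 →
      (a : 𝕜) • U + (b : 𝕜) • V ∈ S) :
    ∀ (s : Finset ℕ) (μ : ℕ → ℝ) (v : ℕ → E), (∀ j ∈ s, 0 ≤ μ j) → (∑ j ∈ s, μ j) = 1 →
      (∀ j ∈ s, v j ∈ S) → (∑ j ∈ s, (μ j : 𝕜) • v j) ∈ S := by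
  intro s
  induction s using Finset.induction_on with
  | empty => intro μ v _ hsum _; simp at hsum
  | insert _ _ ha =>
    rename_i a s ih
    intro μ v hnn hsum hv
    rw [Finset.sum_insert ha] at hsum ⊢
    set r := ∑ j ∈ s, μ j with hr
    have hrnn : 0 ≤ r := Finset.sum_nonneg (fun j hj => hnn j (Finset.mem_insert_of_mem hj))
    rcases eq_or_lt_of_le hrnn with hr0 | hrpos
    · have hz : ∀ j ∈ s, μ j = 0 := by
        intro j hj
        exact (Finset.sum_eq_zero_iff_of_nonneg
          (fun j hj => hnn j (Finset.mem_insert_of_mem hj))).mp hr0.symm j hj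
      have hμa : μ a = 1 := by rw [← hr0] at hsum; linarith
      have hzero : (∑ j ∈ s, (μ j : 𝕜) • v j) = 0 :=
        Finset.sum_eq_zero (fun j hj => by rw [hz j hj]; simp)
      rw [hzero, hμa, add_zero]
      simpa using hv a (Finset.mem_insert_self a s)
    · have hinner : (∑ j ∈ s, ((μ j / r : ℝ) : 𝕜) • v j) ∈ S := by
        refine ih (fun j => μ j / r) v
          (fun j hj => div_nonneg (hnn j (Finset.mem_insert_of_mem hj)) hrnn) ?_
          (fun j hj => hv j (Finset.mem_insert_of_mem hj))
        rw [← Finset.sum_div, ← hr, div_self (ne_of_gt hrpos)]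
      have hmem := hS (v a) (hv a (Finset.mem_insert_self a s)) _ hinner (μ a) r
        (hnn a (Finset.mem_insert_self a s)) hrnn hsum
      have hEq : (r : 𝕜) • (∑ j ∈ s, ((μ j / r : ℝ) : 𝕜) • v j) = ∑ j ∈ s, (μ j : 𝕜) • v j := by
        rw [Finset.smul_sum]
        refine Finset.sum_congr rfl (fun j hj => ?_)
        rw [smul_smul, ← RCLike.ofReal_mul, mul_div_cancel₀ _ (ne_of_gt hrpos)]
      rwa [hEq] at hmem

/-- A continuous multilinear operator attains its norm on the product of closed unit balls. -/
def MLNormAttaining (A : ContinuousMultilinearMap 𝕜 X Y) : Prop :=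
  ∃ x : ∀ i, X i, (∀ i, ‖x i‖ ≤ 1) ∧ ‖A x‖ = ‖A‖

set_option maxHeartbeats 2000000 in
/-- Lemma 2.3: if a norm-closed convex set of continuous `n`-linear operators is not
sequentially closed under pointwise convergence, then some continuous `n`-linear operator
fails to attain its norm. -/
theorem stmt1 [∀ i, CompleteSpace (X i)] [CompleteSpace Y]
    (C : Set (ContinuousMultilinearMap 𝕜 X Y))
    (hclosed : IsClosed C)
    (hconvex : ∀ A ∈ C, ∀ B ∈ C, ∀ t : ℝ, 0 ≤ t → t ≤ 1 →
      ((t : 𝕜) • A + ((1 - t : ℝ) : 𝕜) • B) ∈ C)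
    (hnotseqclosed : ∃ (A : ℕ → ContinuousMultilinearMap 𝕜 X Y)
      (A₀ : ContinuousMultilinearMap 𝕜 X Y), (∀ k, A k ∈ C) ∧ A₀ ∉ C ∧
        ∀ x : ∀ i, X i,
          Filter.Tendsto (fun k => ‖A k x - A₀ x‖) Filter.atTop (nhds 0)) :
    ∃ S : ContinuousMultilinearMap 𝕜 X Y, ¬ MLNormAttaining S := by
  by_contra hcon
  push_neg at hcon
  obtain ⟨A, A₀, hAC, hA₀C, hconv⟩ := hnotseqclosed
  set B : ℕ → ContinuousMultilinearMap 𝕜 X Y := fun k => A k - A₀ with hB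
  -- uniform bound on the B k
  obtain ⟨M, hM0, hM⟩ : ∃ M : ℝ, 0 < M ∧ ∀ k, ‖B k‖ ≤ M := by
    have hpt : ∀ x : ∀ i, X i, ∃ c, ∀ k, ‖A k x‖ ≤ c := by
      intro x
      obtain ⟨c, hc⟩ : BddAbove (Set.range fun k => ‖A k x - A₀ x‖) :=
        (hconv x).bddAbove_range
      refine ⟨c + ‖A₀ x‖, fun k => ?_⟩
      have h1 : ‖A k x - A₀ x‖ ≤ c := hc (Set.mem_range_self k)
      have h2 := norm_add_le (A k x - A₀ x) (A₀ x)
      rw [sub_add_cancel] at h2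
      linarith
    obtain ⟨M₀, hM₀⟩ := multilinear_banach_steinhaus (𝕜 := 𝕜) n X A hpt
    refine ⟨M₀ + ‖A₀‖ + 1, ?_, fun k => ?_⟩
    · have h0 : (0:ℝ) ≤ M₀ := le_trans (norm_nonneg (A 0)) (hM₀ 0)
      have h1 : (0:ℝ) ≤ ‖A₀‖ := norm_nonneg _
      linarith
    · calc ‖B k‖ = ‖A k - A₀‖ := by rw [hB]
        _ ≤ ‖A k‖ + ‖A₀‖ := norm_sub_le _ _
        _ ≤ M₀ + ‖A₀‖ + 1 := by have := hM₀ k; linarith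
  -- separation of A₀ from C
  obtain ⟨d, hd0, hdC⟩ : ∃ d : ℝ, 0 < d ∧ ∀ V ∈ C, d ≤ ‖V - A₀‖ := by
    obtain ⟨ε, hε0, hball⟩ := Metric.isOpen_iff.mp hclosed.isOpen_compl A₀ hA₀C
    refine ⟨ε, hε0, fun V hV => ?_⟩
    by_contra hlt
    push_neg at hlt
    have hmem : V ∈ Metric.ball A₀ ε := by
      rw [Metric.mem_ball, dist_eq_norm]; exact hlt
    exact hball hmem hV
  -- the geometric weights
  set lam : ℕ → ℝ := fun m => (1/2 : ℝ)^m with hlam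
  have lam_pos : ∀ m, 0 < lam m := fun m => pow_pos (by norm_num) m
  have lam_succ : ∀ m, lam (m+1) = lam m / 2 := by
    intro m; rw [hlam]; simp [pow_succ]; ring
  have lam_zero : lam 0 = 1 := by simp [hlam]
  -- the sets of finite convex combinations of tails
  set Fs : ℕ → Set (ContinuousMultilinearMap 𝕜 X Y) := fun m =>
    {V | ∃ N : ℕ, ∃ μ : ℕ → ℝ, (∀ j, 0 ≤ μ j) ∧ (∀ j, j < m → μ j = 0) ∧
      (∀ j, N ≤ j → μ j = 0) ∧ (∑ j ∈ Finset.range N, μ j) = 1 ∧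
      V = ∑ j ∈ Finset.range N, (μ j : 𝕜) • B j} with hFs
  have hF_mem : ∀ m k, m ≤ k → B k ∈ Fs m := by
    intro m k hmk
    refine ⟨k+1, fun j => if j = k then 1 else 0, ?_, ?_, ?_, ?_, ?_⟩
    · intro j; dsimp only; split <;> norm_num
    · intro j hj; have : j ≠ k := by omega
      simp [this]
    · intro j hj; have : j ≠ k := by omega
      simp [this]
    · rw [Finset.sum_ite_eq' (Finset.range (k+1)) k (fun _ => (1:ℝ))]
      simp
    · rw [show (∑ j ∈ Finset.range (k+1), ((if j = k then (1:ℝ) else 0 : ℝ) : 𝕜) • B j)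
          = ∑ j ∈ Finset.range (k+1), (if j = k then ((1:ℝ):𝕜) • B j else 0) from
        Finset.sum_congr rfl (fun j _ => by split <;> simp_all)]
      rw [Finset.sum_ite_eq' (Finset.range (k+1)) k (fun j => ((1:ℝ):𝕜) • B j)]
      simp
  have hF_nonempty : ∀ m, (Fs m).Nonempty := fun m => ⟨B m, hF_mem m m le_rfl⟩
  have hF_norm : ∀ m V, V ∈ Fs m → ‖V‖ ≤ M := by
    rintro m V ⟨N, μ, hnn, hlow, hhigh, hsum1, rfl⟩
    calc ‖∑ j ∈ Finset.range N, (μ j : 𝕜) • B j‖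
        ≤ ∑ j ∈ Finset.range N, ‖(μ j : 𝕜) • B j‖ := norm_sum_le _ _
      _ ≤ ∑ j ∈ Finset.range N, μ j * M := by
          refine Finset.sum_le_sum (fun j hj => ?_)
          rw [norm_smul ((μ j : ℝ) : 𝕜) (B j), RCLike.norm_ofReal, abs_of_nonneg (hnn j)]
          exact mul_le_mul_of_nonneg_left (hM j) (hnn j)
      _ = M := by rw [← Finset.sum_mul, hsum1, one_mul]
  have hF_sub : ∀ m m', m ≤ m' → Fs m' ⊆ Fs m := by
    rintro m m' hmm' V ⟨N, μ, hnn, hlow, hhigh, hsum1, rfl⟩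
    exact ⟨N, μ, hnn, fun j hj => hlow j (lt_of_lt_of_le hj hmm'), hhigh, hsum1, rfl⟩
  have hCbin : ∀ U ∈ C, ∀ V ∈ C, ∀ a b : ℝ, 0 ≤ a → 0 ≤ b → a + b = 1 →
      (a : 𝕜) • U + (b : 𝕜) • V ∈ C := by
    intro U hU V hV a b ha hb hab
    have := hconvex U hU V hV a ha (by linarith)
    rwa [show (1 - a : ℝ) = b by linarith] at this
  have hF_plus : ∀ m V, V ∈ Fs m → V + A₀ ∈ C := by
    rintro m V ⟨N, μ, hnn, hlow, hhigh, hsum1, rfl⟩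
    have hcast : (∑ j ∈ Finset.range N, (μ j : 𝕜)) = 1 := by
      have := congrArg (fun r : ℝ => (r : 𝕜)) hsum1
      push_cast at this
      simpa using this
    have h1 : (∑ j ∈ Finset.range N, (μ j : 𝕜) • B j) + A₀
        = ∑ j ∈ Finset.range N, (μ j : 𝕜) • A j := by
      have h2 : ∀ j, (μ j : 𝕜) • B j = (μ j : 𝕜) • A j - (μ j : 𝕜) • A₀ := by
        intro j; rw [hB]; simp [smul_sub]
      rw [Finset.sum_congr rfl (fun j _ => h2 j), Finset.sum_sub_distrib, ← Finset.sum_smul,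
        hcast, one_smul]
      abel
    rw [h1]
    exact mem_of_convex_sum C hCbin (Finset.range N) μ A
      (fun j _ => hnn j) hsum1 (fun j _ => hAC j)
  have hF_d : ∀ m V, V ∈ Fs m → d ≤ ‖V‖ := by
    intro m V hV
    have := hdC (V + A₀) (hF_plus m V hV)
    rwa [add_sub_cancel_right] at this
  have hFbin : ∀ m, ∀ U ∈ Fs m, ∀ V ∈ Fs m, ∀ a b : ℝ, 0 ≤ a → 0 ≤ b → a + b = 1 →
      (a : 𝕜) • U + (b : 𝕜) • V ∈ Fs m := by
    rintro m U ⟨N₁, μ₁, hnn₁, hlow₁, hhigh₁, hsum₁, rfl⟩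
      V ⟨N₂, μ₂, hnn₂, hlow₂, hhigh₂, hsum₂, rfl⟩ a b ha hb hab
    refine ⟨max N₁ N₂, fun j => a * μ₁ j + b * μ₂ j, ?_, ?_, ?_, ?_, ?_⟩
    · intro j; dsimp only; exact add_nonneg (mul_nonneg ha (hnn₁ j)) (mul_nonneg hb (hnn₂ j))
    · intro j hj; dsimp only; rw [hlow₁ j hj, hlow₂ j hj]; ring
    · intro j hj; dsimp only
      rw [hhigh₁ j (le_trans (le_max_left _ _) hj), hhigh₂ j (le_trans (le_max_right _ _) hj)]
      ring
    · have e₁ : (∑ j ∈ Finset.range (max N₁ N₂), μ₁ j) = ∑ j ∈ Finset.range N₁, μ₁ j := by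
        refine (Finset.sum_subset (Finset.range_subset_range.mpr (le_max_left _ _)) ?_).symm
        intro j _ hj
        exact hhigh₁ j (by simpa using hj)
      have e₂ : (∑ j ∈ Finset.range (max N₁ N₂), μ₂ j) = ∑ j ∈ Finset.range N₂, μ₂ j := by
        refine (Finset.sum_subset (Finset.range_subset_range.mpr (le_max_right _ _)) ?_).symm
        intro j _ hj
        exact hhigh₂ j (by simpa using hj)
      rw [Finset.sum_add_distrib, ← Finset.mul_sum, ← Finset.mul_sum, e₁, e₂, hsum₁, hsum₂]
      linarith
    · have e₁ : (∑ j ∈ Finset.range (max N₁ N₂), (μ₁ j : 𝕜) • B j)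
          = ∑ j ∈ Finset.range N₁, (μ₁ j : 𝕜) • B j := by
        refine (Finset.sum_subset (Finset.range_subset_range.mpr (le_max_left _ _)) ?_).symm
        intro j _ hj
        rw [hhigh₁ j (by simpa using hj)]; simp
      have e₂ : (∑ j ∈ Finset.range (max N₁ N₂), (μ₂ j : 𝕜) • B j)
          = ∑ j ∈ Finset.range N₂, (μ₂ j : 𝕜) • B j := by
        refine (Finset.sum_subset (Finset.range_subset_range.mpr (le_max_right _ _)) ?_).symm
        intro j _ hj
        rw [hhigh₂ j (by simpa using hj)]; simp
      rw [← e₁, ← e₂, Finset.smul_sum, Finset.smul_sum, ← Finset.sum_add_distrib]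
      refine Finset.sum_congr rfl (fun j _ => ?_)
      rw [smul_smul, smul_smul, ← add_smul]
      congr 1
      push_cast
      ring
  -- small error terms
  set et : ℕ → ℝ := fun m => (d/2) * (1/4 : ℝ)^(m+1) with het
  have het_pos : ∀ m, 0 < et m := by
    intro m; rw [het]; dsimp only; positivity
  -- choice of near-minimizers
  have hex : ∀ (m : ℕ) (h : ContinuousMultilinearMap 𝕜 X Y), ∃ gg, gg ∈ Fs m ∧
      ‖h + ((lam m : ℝ) : 𝕜) • gg‖ <
        sInf ((fun g' => ‖h + ((lam m : ℝ) : 𝕜) • g'‖) '' Fs m) + et m := by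
    intro m h
    obtain ⟨a, ha, halt⟩ := Real.lt_sInf_add_pos
      ((hF_nonempty m).image (fun g' => ‖h + ((lam m : ℝ) : 𝕜) • g'‖)) (het_pos m)
    obtain ⟨gg, hgg, rfl⟩ := ha
    exact ⟨gg, hgg, halt⟩
  choose pick hpick1 hpick2 using hex
  -- recursive construction of the sequence w
  obtain ⟨aux, haux0, hauxS⟩ :
      ∃ aux : ℕ → ℕ → ContinuousMultilinearMap 𝕜 X Y,
        aux 0 = (fun _ => 0) ∧
        ∀ m, aux (m+1) = Function.update (aux m) m
          (pick m (∑ i ∈ Finset.range m, ((lam (i+1) : ℝ) : 𝕜) • aux m i)) :=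
    ⟨fun m => Nat.rec (fun _ => 0) (fun m prev => Function.update prev m
        (pick m (∑ i ∈ Finset.range m, ((lam (i+1) : ℝ) : 𝕜) • prev i))) m, rfl, fun m => rfl⟩
  set w : ℕ → ContinuousMultilinearMap 𝕜 X Y := fun k => aux (k+1) k with hwdef
  have haux_stab : ∀ m k, k < m → aux (m+1) k = aux m k := by
    intro m k hk
    rw [hauxS m]
    exact Function.update_of_ne (by omega) _ _
  have haux_agree : ∀ m k, k < m → aux m k = w k := by
    intro m k hk
    rw [hwdef]
    dsimp only
    have : ∀ m', k + 1 ≤ m' → aux m' k = aux (k+1) k := by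
      intro m' hm'
      induction m', hm' using Nat.le_induction with
      | base => rfl
      | succ m' hm' ih => rw [haux_stab m' k (by omega), ih]
    exact this m hk
  set P : ℕ → ContinuousMultilinearMap 𝕜 X Y :=
    fun m => ∑ i ∈ Finset.range m, ((lam (i+1) : ℝ) : 𝕜) • w i with hP
  have hw_eq : ∀ m, w m = pick m (P m) := by
    intro m
    have h1 : w m = pick m (∑ i ∈ Finset.range m, ((lam (i+1) : ℝ) : 𝕜) • aux m i) := by
      rw [hwdef]
      dsimp only
      rw [hauxS m]
      exact Function.update_self _ _ _
    rw [h1, hP]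
    congr 1
    exact Finset.sum_congr rfl (fun i hi => by
      rw [haux_agree m i (Finset.mem_range.mp hi)])
  have hwF : ∀ m, w m ∈ Fs m := by
    intro m; rw [hw_eq m]; exact hpick1 m (P m)
  have hw_ineq : ∀ m, ‖P m + ((lam m : ℝ) : 𝕜) • w m‖ <
      sInf ((fun g' => ‖P m + ((lam m : ℝ) : 𝕜) • g'‖) '' Fs m) + et m := by
    intro m
    have := hpick2 m (P m)
    rwa [← hw_eq m] at this
  have hw_norm : ∀ m, ‖w m‖ ≤ M := fun m => hF_norm m (w m) (hwF m)
  -- the candidate operator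
  have hsummable : Summable (fun k => ((lam (k+1) : ℝ) : 𝕜) • w k) := by
    refine Summable.of_norm_bounded (g := fun k => (1/2:ℝ)^k * (M/2))
      ((summable_geometric_of_lt_one (by norm_num) (by norm_num)).mul_right _) ?_
    intro k
    rw [norm_smul ((lam (k+1) : ℝ) : 𝕜) (w k), RCLike.norm_ofReal,
      abs_of_nonneg (le_of_lt (lam_pos (k+1)))]
    calc lam (k+1) * ‖w k‖ ≤ lam (k+1) * M :=
          mul_le_mul_of_nonneg_left (hw_norm k) (le_of_lt (lam_pos (k+1)))
      _ = (1/2:ℝ)^k * (M/2) := by rw [hlam]; dsimp only; ring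
  set Sw : ContinuousMultilinearMap 𝕜 X Y := ∑' k, ((lam (k+1) : ℝ) : 𝕜) • w k with hSw
  have htail : ∀ J, ‖Sw - P J‖ ≤ lam J * M := by
    intro J
    have h1 := Summable.sum_add_tsum_nat_add J hsummable
    have h2 : Sw - P J = ∑' i, ((lam (i + J + 1) : ℝ) : 𝕜) • w (i + J) :=
      (eq_sub_of_add_eq' h1).symm
    have h3 : ∀ i : ℕ, ‖((lam (i + J + 1) : ℝ) : 𝕜) • w (i + J)‖
        ≤ (1/2:ℝ)^i * (lam (J+1) * M) := by
      intro i
      rw [norm_smul ((lam (i + J + 1) : ℝ) : 𝕜) (w (i + J)), RCLike.norm_ofReal,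
        abs_of_nonneg (le_of_lt (lam_pos _))]
      calc lam (i+J+1) * ‖w (i+J)‖ ≤ lam (i+J+1) * M :=
            mul_le_mul_of_nonneg_left (hw_norm _) (le_of_lt (lam_pos _))
        _ = (1/2:ℝ)^i * (lam (J+1) * M) := by
            rw [hlam]; dsimp only
            rw [show i+J+1 = i + (J+1) by omega, pow_add]
            ring
    have hsnorm : Summable (fun i => ‖((lam (i + J + 1) : ℝ) : 𝕜) • w (i + J)‖) :=
      Summable.of_nonneg_of_le (fun i => norm_nonneg _) h3
        (((summable_geometric_of_lt_one (by norm_num) (by norm_num))).mul_right _)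
    have hgeo2 : Summable (fun i : ℕ => (1/2:ℝ)^i * (lam (J+1) * M)) :=
      (summable_geometric_of_lt_one (by norm_num) (by norm_num)).mul_right _
    calc ‖Sw - P J‖ = ‖∑' i, ((lam (i + J + 1) : ℝ) : 𝕜) • w (i + J)‖ := by rw [h2]
      _ ≤ ∑' i, ‖((lam (i + J + 1) : ℝ) : 𝕜) • w (i + J)‖ := norm_tsum_le_tsum_norm hsnorm
      _ ≤ ∑' i, (1/2:ℝ)^i * (lam (J+1) * M) := Summable.tsum_le_tsum h3 hsnorm hgeo2
      _ = (∑' i, (1/2:ℝ)^i) * (lam (J+1) * M) := tsum_mul_right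
      _ = lam J * M := by
          rw [tsum_geometric_of_lt_one (by norm_num) (by norm_num)]
          have := lam_succ J
          have : lam J = 2 * lam (J+1) := by linarith
          rw [this]; ring
  -- the geometric partial sum identity
  have hgeom : ∀ m J, m ≤ J → (∑ i ∈ Finset.Ico m J, lam (i+1)) = lam m - lam J := by
    intro m J hmJ
    induction J, hmJ using Nat.le_induction with
    | base => simp
    | succ J hmJ ih =>
      rw [Finset.sum_Ico_succ_top hmJ, ih]
      have h1 := lam_succ J
      linarith
  -- the infimum is bounded by ‖Sw‖
  have hInf_le : ∀ m, sInf ((fun g' => ‖P m + ((lam m : ℝ) : 𝕜) • g'‖) '' Fs m) ≤ ‖Sw‖ := by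
    intro m
    have hbdd : BddBelow ((fun g' => ‖P m + ((lam m : ℝ) : 𝕜) • g'‖) '' Fs m) :=
      ⟨0, by rintro a ⟨gg, hgg, rfl⟩; exact norm_nonneg _⟩
    refine le_of_forall_pos_le_add (fun ε hε => ?_)
    obtain ⟨J₀, hJ₀⟩ := exists_pow_lt_of_lt_one (show (0:ℝ) < ε/(2*M) by positivity)
      (show (1/2:ℝ) < 1 by norm_num)
    set J := max m J₀ with hJdef
    have hmJ : m ≤ J := le_max_left _ _
    set c : ℕ → ℝ := fun i => if i = J then lam J / lam m else lam (i+1) / lam m with hc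
    have hcnn : ∀ i, 0 ≤ c i := by
      intro i; rw [hc]; dsimp only
      split <;> exact div_nonneg (le_of_lt (lam_pos _)) (le_of_lt (lam_pos _))
    have hcico : ∀ i ∈ Finset.Ico m J, c i = lam (i+1) / lam m := by
      intro i hi
      have hiJ : i ≠ J := by have := (Finset.mem_Ico.mp hi).2; omega
      rw [hc]; dsimp only; rw [if_neg hiJ]
    have hcJ : c J = lam J / lam m := by rw [hc]; dsimp only; rw [if_pos rfl]
    have hsum_c : (∑ i ∈ Finset.Ico m (J+1), c i) = 1 := by
      rw [Finset.sum_Ico_succ_top hmJ, Finset.sum_congr rfl hcico, ← Finset.sum_div,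
        hgeom m J hmJ, hcJ]
      rw [← add_div, sub_add_cancel, div_self (ne_of_gt (lam_pos m))]
    have hZmem : (∑ i ∈ Finset.Ico m (J+1), ((c i : ℝ) : 𝕜) • w i) ∈ Fs m := by
      refine mem_of_convex_sum (Fs m) (hFbin m) (Finset.Ico m (J+1)) c w
        (fun i _ => hcnn i) hsum_c (fun i hi => ?_)
      exact hF_sub m i (Finset.mem_Ico.mp hi).1 (hwF i)
    have hZeq : P m + ((lam m : ℝ) : 𝕜) • (∑ i ∈ Finset.Ico m (J+1), ((c i : ℝ) : 𝕜) • w i)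
        = P (J+1) + ((lam (J+1) : ℝ) : 𝕜) • w J := by
      have hsplit : P (J+1) = P m + ∑ i ∈ Finset.Ico m (J+1), ((lam (i+1) : ℝ) : 𝕜) • w i := by
        simp only [hP, Finset.range_eq_Ico]
        exact (Finset.sum_Ico_consecutive _ (Nat.zero_le m) (by omega : m ≤ J+1)).symm
      have hstep1 : ((lam m : ℝ) : 𝕜) • (∑ i ∈ Finset.Ico m (J+1), ((c i : ℝ) : 𝕜) • w i)
          = ∑ i ∈ Finset.Ico m (J+1), ((lam m * c i : ℝ) : 𝕜) • w i := by
        rw [Finset.smul_sum]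
        exact Finset.sum_congr rfl (fun i _ => by rw [smul_smul, ← RCLike.ofReal_mul])
      have hstep2 : (∑ i ∈ Finset.Ico m (J+1), ((lam m * c i : ℝ) : 𝕜) • w i)
          = (∑ i ∈ Finset.Ico m J, ((lam (i+1) : ℝ) : 𝕜) • w i) + ((lam J : ℝ) : 𝕜) • w J := by
        rw [Finset.sum_Ico_succ_top hmJ]
        congr 1
        · refine Finset.sum_congr rfl (fun i hi => ?_)
          rw [hcico i hi]
          congr 2
          rw [mul_div_assoc']; exact mul_div_cancel_left₀ _ (ne_of_gt (lam_pos m))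
        · rw [hcJ]
          congr 2
          rw [mul_div_assoc']; exact mul_div_cancel_left₀ _ (ne_of_gt (lam_pos m))
      have hstep3 : ((lam J : ℝ) : 𝕜) = ((lam (J+1) : ℝ) : 𝕜) + ((lam (J+1) : ℝ) : 𝕜) := by
        rw [← RCLike.ofReal_add]
        have h1 := lam_succ J
        have h2 : lam J = lam (J+1) + lam (J+1) := by linarith
        exact_mod_cast congrArg (fun r : ℝ => (r : 𝕜)) h2
      rw [hstep1, hstep2, hsplit, Finset.sum_Ico_succ_top hmJ, hstep3, add_smul]
      abel
    have h1 : sInf ((fun g' => ‖P m + ((lam m : ℝ) : 𝕜) • g'‖) '' Fs m)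
        ≤ ‖P (J+1) + ((lam (J+1) : ℝ) : 𝕜) • w J‖ := by
      rw [← hZeq]
      exact csInf_le hbdd ⟨_, hZmem, rfl⟩
    have h2 : ‖P (J+1) + ((lam (J+1) : ℝ) : 𝕜) • w J - Sw‖ ≤ lam J * M := by
      have he : P (J+1) + ((lam (J+1) : ℝ) : 𝕜) • w J - Sw
          = (P (J+1) - Sw) + ((lam (J+1) : ℝ) : 𝕜) • w J := by abel
      rw [he]
      have hb1 : ‖P (J+1) - Sw‖ ≤ lam (J+1) * M := by
        rw [norm_sub_rev]; exact htail (J+1)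
      have hb2 : ‖((lam (J+1) : ℝ) : 𝕜) • w J‖ ≤ lam (J+1) * M := by
        rw [norm_smul ((lam (J+1) : ℝ) : 𝕜) (w J), RCLike.norm_ofReal,
          abs_of_nonneg (le_of_lt (lam_pos _))]
        exact mul_le_mul_of_nonneg_left (hw_norm J) (le_of_lt (lam_pos _))
      calc ‖(P (J+1) - Sw) + ((lam (J+1) : ℝ) : 𝕜) • w J‖
          ≤ ‖P (J+1) - Sw‖ + ‖((lam (J+1) : ℝ) : 𝕜) • w J‖ := norm_add_le _ _
        _ ≤ lam (J+1) * M + lam (J+1) * M := by linarith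
        _ = lam J * M := by
            have h5 := lam_succ J
            have h6 : lam J = 2 * lam (J+1) := by linarith
            rw [h6]; ring
    have h3 : ‖P (J+1) + ((lam (J+1) : ℝ) : 𝕜) • w J‖ ≤ ‖Sw‖ + lam J * M := by
      have h4 := norm_add_le (P (J+1) + ((lam (J+1) : ℝ) : 𝕜) • w J - Sw) Sw
      rw [sub_add_cancel] at h4
      calc ‖P (J+1) + ((lam (J+1) : ℝ) : 𝕜) • w J‖
          ≤ ‖P (J+1) + ((lam (J+1) : ℝ) : 𝕜) • w J - Sw‖ + ‖Sw‖ := h4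
        _ ≤ ‖Sw‖ + lam J * M := by linarith
    have h4 : lam J * M ≤ ε := by
      have hlamJ : lam J ≤ (1/2:ℝ)^J₀ := by
        rw [hlam]
        exact pow_le_pow_of_le_one (by norm_num) (by norm_num) (le_max_right _ _)
      have h5 : lam J * M ≤ (1/2:ℝ)^J₀ * M :=
        mul_le_mul_of_nonneg_right hlamJ (le_of_lt hM0)
      have h6 : (1/2:ℝ)^J₀ * M ≤ (ε/(2*M)) * M :=
        mul_le_mul_of_nonneg_right (le_of_lt hJ₀) (le_of_lt hM0)
      have h7 : (ε/(2*M)) * M = ε/2 := by field_simp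
      nlinarith
    linarith
  -- Sw attains its norm
  obtain ⟨x, hx1, hx2⟩ := hcon Sw
  have hP0 : P 0 = 0 := by simp [hP]
  have hSd : d ≤ ‖Sw‖ := by
    refine le_trans (le_csInf ((hF_nonempty 0).image _) ?_) (hInf_le 0)
    rintro a ⟨gg, hgg, rfl⟩
    dsimp only
    have he : P 0 + ((lam 0 : ℝ) : 𝕜) • gg = gg := by
      rw [hP0, lam_zero]
      push_cast
      rw [one_smul, zero_add]
    rw [he]
    exact hF_d 0 gg hgg
  have hxne : Sw x ≠ 0 := by
    have h1 : 0 < ‖Sw x‖ := by rw [hx2]; linarith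
    exact norm_pos_iff.mp h1
  obtain ⟨g, hg1, hg2⟩ := exists_dual_vector 𝕜 (Sw x) (norm_ne_zero_iff.mpr hxne)
  obtain ⟨ψ, hψ⟩ : ∃ ψ : ContinuousMultilinearMap 𝕜 X Y →L[𝕜] 𝕜, ∀ V, ψ V = g (V x) :=
    ⟨g.comp (LinearMap.mkContinuous
      ({ toFun := fun V => V x
         map_add' := fun U V => rfl
         map_smul' := fun c V => rfl } : ContinuousMultilinearMap 𝕜 X Y →ₗ[𝕜] Y)
      (∏ i, ‖x i‖) (fun V => by simpa [mul_comm] using V.le_opNorm x)), fun V => rfl⟩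
  have hprod : (∏ i, ‖x i‖) ≤ 1 :=
    Finset.prod_le_one (fun i _ => norm_nonneg _) (fun i _ => hx1 i)
  have hφ_le : ∀ V, RCLike.re (ψ V) ≤ ‖V‖ := by
    intro V
    calc RCLike.re (ψ V) ≤ ‖ψ V‖ := RCLike.re_le_norm _
      _ = ‖g (V x)‖ := by rw [hψ]
      _ ≤ ‖g‖ * ‖V x‖ := g.le_opNorm _
      _ = ‖V x‖ := by rw [hg1, one_mul]
      _ ≤ ‖V‖ * ∏ i, ‖x i‖ := V.le_opNorm x
      _ ≤ ‖V‖ := mul_le_of_le_one_right (norm_nonneg _) hprod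
  have hφ_S : RCLike.re (ψ Sw) = ‖Sw‖ := by
    rw [hψ, hg2, RCLike.ofReal_re]
    exact hx2
  have hφ_smul : ∀ (r : ℝ) (V : ContinuousMultilinearMap 𝕜 X Y),
      RCLike.re (ψ ((r : 𝕜) • V)) = r * RCLike.re (ψ V) := by
    intro r V
    rw [map_smul, smul_eq_mul, RCLike.re_ofReal_mul]
  have hre_add : ∀ (U V : ContinuousMultilinearMap 𝕜 X Y) (r : ℝ),
      RCLike.re (ψ (U + (r : 𝕜) • V)) = RCLike.re (ψ U) + r * RCLike.re (ψ V) := by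
    intro U V r
    rw [map_add, map_add, hφ_smul]
  have hφ_P : ∀ m, RCLike.re (ψ (P m))
      = ∑ i ∈ Finset.range m, lam (i+1) * RCLike.re (ψ (w i)) := by
    intro m
    simp only [hP, map_sum]
    exact Finset.sum_congr rfl (fun i _ => hφ_smul (lam (i+1)) (w i))
  have hφ_hasSum : HasSum (fun k => lam (k+1) * RCLike.re (ψ (w k))) (RCLike.re (ψ Sw)) := by
    have hs : HasSum (fun k => ((lam (k+1) : ℝ) : 𝕜) • w k) Sw := hsummable.hasSum
    have hs2 := (hs.mapL ψ).mapL RCLike.reCLM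
    have he : (fun k => lam (k+1) * RCLike.re (ψ (w k)))
        = fun k => RCLike.reCLM (ψ (((lam (k+1) : ℝ) : 𝕜) • w k)) := by
      funext k
      have : (RCLike.reCLM : 𝕜 → ℝ) (ψ (((lam (k+1) : ℝ) : 𝕜) • w k))
          = RCLike.re (ψ (((lam (k+1) : ℝ) : 𝕜) • w k)) := by
        rw [RCLike.reCLM_apply]
      rw [this, hφ_smul]
    rw [he]
    have he2 : (RCLike.reCLM : 𝕜 → ℝ) (ψ Sw) = RCLike.re (ψ Sw) := by rw [RCLike.reCLM_apply]
    rw [← he2]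
    exact hs2
  have hφ_summable : Summable (fun k => lam (k+1) * RCLike.re (ψ (w k))) := ⟨_, hφ_hasSum⟩
  have htsum : (∑' k, lam (k+1) * RCLike.re (ψ (w k))) = RCLike.re (ψ Sw) := hφ_hasSum.tsum_eq
  -- key inequality from the near-minimal choice
  have hkey : ∀ m, lam m * RCLike.re (ψ (w m))
      ≤ (RCLike.re (ψ Sw) - RCLike.re (ψ (P m))) + et m := by
    intro m
    have h1 := hre_add (P m) (w m) (lam m)
    have h2 := hφ_le (P m + ((lam m : ℝ) : 𝕜) • w m)
    have h3 := hw_ineq m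
    have h4 := hInf_le m
    have h5 : RCLike.re (ψ (P m + ((lam m : ℝ) : 𝕜) • w m)) < ‖Sw‖ + et m := by linarith
    rw [hφ_S.symm] at h5
    linarith [h1]
  -- lower bound for the deficits, by induction
  have hδ_lb : ∀ m, (d/2) * lam m + (d/4) * (1/4:ℝ)^m
      ≤ RCLike.re (ψ Sw) - RCLike.re (ψ (P m)) := by
    intro m
    induction m with
    | zero =>
      rw [hP0, map_zero, map_zero, hφ_S, lam_zero]
      have := hSd
      norm_num
      linarith
    | succ m ih =>
      have h1 := hkey m
      have h2 : RCLike.re (ψ (P (m+1)))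
          = RCLike.re (ψ (P m)) + lam (m+1) * RCLike.re (ψ (w m)) := by
        have he : P (m+1) = P m + ((lam (m+1) : ℝ) : 𝕜) • w m := by
          simp only [hP]
          rw [Finset.sum_range_succ]
        rw [he, hre_add]
      have h3 := lam_succ m
      have h4 : (1/4:ℝ)^(m+1) = (1/4:ℝ)^m * (1/4) := pow_succ _ _
      have h6 : lam (m+1) * RCLike.re (ψ (w m)) = (lam m * RCLike.re (ψ (w m)))/2 := by
        rw [h3]; ring
      have h7 : (d/2) * lam (m+1) = (d/4) * lam m := by rw [h3]; ring
      have h8 : (d/4) * (1/4:ℝ)^(m+1) = (d/16) * (1/4:ℝ)^m := by rw [h4]; ring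
      have h9 : et m = (d/8) * (1/4:ℝ)^m := by rw [het]; dsimp only; rw [h4]; ring
      have hδ1 : RCLike.re (ψ Sw) - RCLike.re (ψ (P (m+1)))
          = (RCLike.re (ψ Sw) - RCLike.re (ψ (P m))) - lam (m+1) * RCLike.re (ψ (w m)) := by
        rw [h2]; ring
      rw [hδ1]
      linarith [h1, ih]
  -- smallness of the tail at the attaining point
  obtain ⟨N, hN⟩ := Filter.eventually_atTop.mp
    ((hconv x).eventually_lt_const (show (0:ℝ) < d/8 by linarith))
  have hBsmall : ∀ j, N ≤ j → RCLike.re (ψ (B j)) ≤ d/8 := by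
    intro j hj
    have h1 : RCLike.re (ψ (B j)) ≤ ‖B j x‖ := by
      calc RCLike.re (ψ (B j)) ≤ ‖ψ (B j)‖ := RCLike.re_le_norm _
        _ = ‖g (B j x)‖ := by rw [hψ]
        _ ≤ ‖g‖ * ‖B j x‖ := g.le_opNorm _
        _ = ‖B j x‖ := by rw [hg1, one_mul]
    have h2 : ‖B j x‖ < d/8 := by
      have he : B j x = A j x - A₀ x := by rw [hB]; simp
      rw [he]
      exact hN j hj
    linarith
  have hwsmall : ∀ i, N ≤ i → RCLike.re (ψ (w i)) ≤ d/8 := by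
    intro i hi
    obtain ⟨N', μ, hnn, hlow, hhigh, hsum1, hrep⟩ := hwF i
    have h1 : RCLike.re (ψ (w i)) = ∑ j ∈ Finset.range N', μ j * RCLike.re (ψ (B j)) := by
      rw [hrep]
      simp only [map_sum]
      exact Finset.sum_congr rfl (fun j _ => hφ_smul (μ j) (B j))
    rw [h1]
    calc (∑ j ∈ Finset.range N', μ j * RCLike.re (ψ (B j)))
        ≤ ∑ j ∈ Finset.range N', μ j * (d/8) := by
          refine Finset.sum_le_sum (fun j hj => ?_)
          rcases eq_or_lt_of_le (hnn j) with h0 | hpos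
          · rw [← h0]; simp
          · have hji : i ≤ j := by
              by_contra hc'
              push_neg at hc'
              exact (ne_of_gt hpos) (hlow j hc')
            exact mul_le_mul_of_nonneg_left (hBsmall j (le_trans hi hji)) (hnn j)
      _ = d/8 := by rw [← Finset.sum_mul, hsum1, one_mul]
  -- upper bound on the deficit at N
  have hub : RCLike.re (ψ Sw) - RCLike.re (ψ (P N)) ≤ (d/8) * lam N := by
    have h1 := Summable.sum_add_tsum_nat_add N hφ_summable
    have h2 : RCLike.re (ψ Sw) - RCLike.re (ψ (P N))
        = ∑' i, lam (i + N + 1) * RCLike.re (ψ (w (i + N))) := by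
      rw [hφ_P N, ← htsum]
      linarith [h1]
    rw [h2]
    have hsum_shift : Summable (fun i => lam (i + N + 1) * RCLike.re (ψ (w (i + N)))) :=
      (summable_nat_add_iff N).mpr hφ_summable
    have hgeo3 : Summable (fun i : ℕ => (1/2:ℝ)^i * (lam (N+1) * (d/8))) :=
      (summable_geometric_of_lt_one (by norm_num) (by norm_num)).mul_right _
    calc (∑' i, lam (i+N+1) * RCLike.re (ψ (w (i+N))))
        ≤ ∑' i, (1/2:ℝ)^i * (lam (N+1) * (d/8)) := by
          refine Summable.tsum_le_tsum (fun i => ?_) hsum_shift hgeo3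
          have hle := hwsmall (i+N) (by omega)
          calc lam (i+N+1) * RCLike.re (ψ (w (i+N))) ≤ lam (i+N+1) * (d/8) :=
                mul_le_mul_of_nonneg_left hle (le_of_lt (lam_pos _))
            _ = (1/2:ℝ)^i * (lam (N+1)*(d/8)) := by
                rw [hlam]; dsimp only
                rw [show i+N+1 = i+(N+1) by omega, pow_add]
                ring
      _ = (∑' i, (1/2:ℝ)^i) * (lam (N+1) * (d/8)) := tsum_mul_right
      _ = (d/8) * lam N := by
          rw [tsum_geometric_of_lt_one (by norm_num) (by norm_num)]
          have h3 := lam_succ N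
          have h4 : lam N = 2 * lam (N+1) := by linarith
          rw [h4]
          norm_num
          ring
  -- contradiction
  have hlb := hδ_lb N
  have hx4 : (0:ℝ) < (1/4:ℝ)^N := by positivity
  have hlam4 : 0 < lam N := lam_pos N
  nlinarith [hlb, hub, mul_pos hd0 hlam4, mul_pos hd0 hx4]
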